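/- arXiv:1705.06892 — 2 statements merged into one kernel-verified Lean document; each statement's English description precedes it below -/
import Mathlib

section
/- If D₁, ..., D_m are nonempty generalized polyhedral convex sets in X, then the closure of D₁ + ⋯ + D_m is a generalized polyhedral convex set. -/
open Pointwise

/-- A generalized polyhedral convex set: the intersection of a closed affine
subspace with finitely many closed half-spaces given by continuous linear
functionals. -/
def IsGPCS {X : Type*} [AddCommGroup X] [Module ℝ X] [TopologicalSpace X]
    (D : Set X) : Prop :=
  ∃ (p : ℕ) (f : Fin p → (X →L[ℝ] ℝ)) (α : Fin p → ℝ)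
    (x₀ : X) (W : Submodule ℝ X),
    IsClosed (x₀ +ᵥ (W : Set X)) ∧
    D = {x ∈ x₀ +ᵥ (W : Set X) | ∀ i, f i x ≤ α i}

/-- A polyhedral convex set: a finite intersection of closed half-spaces. -/
def IsPCS {X : Type*} [AddCommGroup X] [Module ℝ X] [TopologicalSpace X]
    (D : Set X) : Prop :=
  ∃ (p : ℕ) (f : Fin p → (X →L[ℝ] ℝ)) (α : Fin p → ℝ),
    D = {x | ∀ i, f i x ≤ α i}

/-- `F` is a face of the convex set `C`. -/
def IsFaceOf {X : Type*} [AddCommGroup X] [Module ℝ X] (F C : Set X) : Prop :=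
  Convex ℝ F ∧ F ⊆ C ∧
    ∀ ⦃x y : X⦄, x ∈ C → y ∈ C → ∀ t : ℝ, 0 < t → t < 1 →
      (1 - t) • x + t • y ∈ F → x ∈ F ∧ y ∈ F


open Set Pointwise

/-- A (linear-algebraic) polyhedron: finite intersection of half-spaces given by
linear functionals. -/
def IsPolyL {E : Type*} [AddCommGroup E] [Module ℝ E] (s : Set E) : Prop :=
  ∃ (ι : Type) (_ : Fintype ι) (f : ι → (E →ₗ[ℝ] ℝ)) (α : ι → ℝ),
    s = {x | ∀ i, f i x ≤ α i}

section PolyL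

variable {E F : Type*} [AddCommGroup E] [Module ℝ E] [AddCommGroup F] [Module ℝ F]

lemma isPolyL_univ : IsPolyL (Set.univ : Set E) :=
  ⟨Empty, inferInstance, fun i => i.elim, fun i => i.elim, by ext x; simp⟩

lemma IsPolyL.preimage {s : Set F} (hs : IsPolyL s) (A : E →ₗ[ℝ] F) :
    IsPolyL (A ⁻¹' s) := by
  obtain ⟨ι, _, f, α, rfl⟩ := hs
  exact ⟨ι, inferInstance, fun i => (f i).comp A, α, rfl⟩

lemma IsPolyL.inter {s t : Set E} (hs : IsPolyL s) (ht : IsPolyL t) :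
    IsPolyL (s ∩ t) := by
  obtain ⟨ι, _, f, α, rfl⟩ := hs
  obtain ⟨κ, _, g, β, rfl⟩ := ht
  refine ⟨ι ⊕ κ, inferInstance, Sum.elim f g, Sum.elim α β, ?_⟩
  ext x
  simp [Sum.forall]

lemma isPolyL_iInter {ι' : Type*} [Fintype ι'] {s : ι' → Set E}
    (h : ∀ i, IsPolyL (s i)) : IsPolyL (⋂ i, s i) := by
  classical
  rw [← (Fintype.equivFin ι').symm.surjective.iInter_comp s]
  set n := Fintype.card ι'
  set s' : Fin n → Set E := fun k => s ((Fintype.equivFin ι').symm k) with hs'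
  have h' : ∀ k, IsPolyL (s' k) := fun k => h _
  clear_value s'
  clear hs' h
  choose κ inst f α hf using h'
  letI : ∀ i, Fintype (κ i) := inst
  refine ⟨Σ i, κ i, inferInstance, fun p => f p.1 p.2, fun p : Σ i, κ i => α p.1 p.2, ?_⟩
  ext x
  simp only [mem_iInter, Sigma.forall, mem_setOf_eq]
  rw [Set.mem_iInter]
  constructor
  · intro hx i j
    have := hx i
    rw [hf i] at this
    exact this j
  · intro hx i
    rw [hf i]
    exact fun j => hx i j


/-- Fourier–Motzkin elimination of a single real variable. -/
lemma IsPolyL.proj {s : Set (ℝ × E)} (hs : IsPolyL s) :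
    IsPolyL {y | ∃ t : ℝ, (t, y) ∈ s} := by
  classical
  obtain ⟨ι, _, f, α, rfl⟩ := hs
  set c : ι → ℝ := fun i => f i (1, 0) with hc
  set g : ι → (E →ₗ[ℝ] ℝ) := fun i => (f i).comp (LinearMap.inr ℝ ℝ E) with hg
  have hf : ∀ i (t : ℝ) (y : E), f i (t, y) = c i * t + g i y := by
    intro i t y
    have h1 : (t, y) = t • ((1 : ℝ), (0 : E)) + ((0 : ℝ), y) := by
      simp [Prod.ext_iff]
    rw [h1, map_add, map_smul, smul_eq_mul, hc, hg]
    simp [mul_comm]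
  refine ⟨ι ⊕ ι × ι, inferInstance,
    Sum.elim (fun i => if c i = 0 then g i else 0)
      (fun p => if 0 < c p.1 ∧ c p.2 < 0 then
        c p.1 • g p.2 - c p.2 • g p.1 else 0),
    Sum.elim (fun i => if c i = 0 then α i else 0)
      (fun p => if 0 < c p.1 ∧ c p.2 < 0 then
        c p.1 * α p.2 - c p.2 * α p.1 else 0), ?_⟩
  ext y
  simp only [mem_setOf_eq, Sum.forall, Sum.elim_inl, Sum.elim_inr, Prod.forall]
  constructor
  · rintro ⟨t, ht⟩
    refine ⟨fun i => ?_, fun i j => ?_⟩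
    · by_cases h0 : c i = 0
      · rw [if_pos h0, if_pos h0]
        have := ht i
        rw [hf i t y, h0] at this
        linarith
      · rw [if_neg h0, if_neg h0]
        simp
    · by_cases hij : 0 < c i ∧ c j < 0
      · rw [if_pos hij, if_pos hij]
        have hi := ht i; have hj := ht j
        rw [hf i t y] at hi; rw [hf j t y] at hj
        -- from hi: c j * (c i * t + g i y) ≥ c j * α i   (c j < 0)
        have e1 : c j * α i ≤ c j * (c i * t + g i y) :=
          mul_le_mul_of_nonpos_left hi (le_of_lt hij.2)
        have e2 : c i * (c j * t + g j y) ≤ c i * α j :=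
          mul_le_mul_of_nonneg_left hj (le_of_lt hij.1)
        simp only [LinearMap.sub_apply, LinearMap.smul_apply, smul_eq_mul]
        nlinarith [e1, e2]
      · rw [if_neg hij, if_neg hij]
        simp
  · rintro ⟨h0, hpair⟩
    have h0' : ∀ i, c i = 0 → g i y ≤ α i := by
      intro i hi
      have := h0 i
      rwa [if_pos hi, if_pos hi] at this
    have hpair' : ∀ i j, 0 < c i → c j < 0 →
        c i * g j y - c j * g i y ≤ c i * α j - c j * α i := by
      intro i j hi hj
      have := hpair i j
      rw [if_pos ⟨hi, hj⟩, if_pos ⟨hi, hj⟩] at this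
      simpa using this
    -- upper bound for i with c i > 0 : t ≤ (α i - g i y) / c i
    -- lower bound for j with c j < 0 : t ≥ (α j - g j y) / c j
    have hub : ∀ i j, 0 < c i → c j < 0 →
        (α j - g j y) / c j ≤ (α i - g i y) / c i := by
      intro i j hi hj
      rw [le_div_iff₀ hi, div_mul_eq_mul_div, div_le_iff_of_neg hj]
      nlinarith [hpair' i j hi hj]
    set P : Finset ι := Finset.univ.filter (fun i => 0 < c i) with hP
    set N : Finset ι := Finset.univ.filter (fun i => c i < 0) with hN
    have hmemP : ∀ i, i ∈ P ↔ 0 < c i := by intro i; simp [hP]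
    have hmemN : ∀ i, i ∈ N ↔ c i < 0 := by intro i; simp [hN]
    have hgoal : ∀ t : ℝ, (∀ i ∈ P, t ≤ (α i - g i y) / c i) →
        (∀ j ∈ N, (α j - g j y) / c j ≤ t) → ∃ t', ∀ i, f i (t', y) ≤ α i := by
      intro t hup hlo
      refine ⟨t, fun i => ?_⟩
      rw [hf i]
      rcases lt_trichotomy (c i) 0 with hlt | heq | hgt
      · have := hlo i ((hmemN i).2 hlt)
        rw [div_le_iff_of_neg hlt] at this
        nlinarith
      · rw [heq, zero_mul, zero_add]; exact h0' i heq
      · have := hup i ((hmemP i).2 hgt)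
        rw [le_div_iff₀ hgt] at this
        nlinarith
    by_cases hPn : P.Nonempty
    · obtain ⟨i₀, hi₀, hmin⟩ := P.exists_min_image (fun i => (α i - g i y) / c i) hPn
      refine hgoal _ (fun i hi => hmin i hi) (fun j hj => ?_)
      exact hub i₀ j ((hmemP i₀).1 hi₀) ((hmemN j).1 hj)
    · by_cases hNn : N.Nonempty
      · obtain ⟨j₀, hj₀, hmax⟩ := N.exists_max_image (fun j => (α j - g j y) / c j) hNn
        refine hgoal _ (fun i hi => absurd ⟨i, hi⟩ hPn) (fun j hj => hmax j hj)
      · exact hgoal 0 (fun i hi => absurd ⟨i, hi⟩ hPn) (fun j hj => absurd ⟨j, hj⟩ hNn)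

/-- The linear version of `Equiv.piFinSucc`. -/
noncomputable def piFinSuccLinear (n : ℕ) : (Fin (n + 1) → ℝ) ≃ₗ[ℝ] ℝ × (Fin n → ℝ) :=
  { (Fin.consEquiv fun _ => ℝ).symm with
    map_add' := fun x y => rfl
    map_smul' := fun c x => rfl }

/-- Eliminating finitely many real variables. -/
lemma isPolyL_exists_pi {n : ℕ} {s : Set ((Fin n → ℝ) × F)} (hs : IsPolyL s) :
    IsPolyL {y | ∃ x, (x, y) ∈ s} := by
  induction n with
  | zero =>
    have : {y | ∃ x, (x, y) ∈ s} = (LinearMap.inr ℝ (Fin 0 → ℝ) F) ⁻¹' s := by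
      ext y
      simp only [mem_setOf_eq, mem_preimage, LinearMap.inr_apply]
      constructor
      · rintro ⟨x, hx⟩
        rwa [Subsingleton.elim (0 : Fin 0 → ℝ) x]
      · intro h; exact ⟨0, h⟩
    rw [this]
    exact hs.preimage _
  | succ n ih =>
    -- L : ℝ × ((Fin n → ℝ) × F) →ₗ (Fin (n+1) → ℝ) × F
    set L : ℝ × ((Fin n → ℝ) × F) →ₗ[ℝ] (Fin (n + 1) → ℝ) × F :=
      (LinearMap.prodMap ((piFinSuccLinear n).symm : ℝ × (Fin n → ℝ) →ₗ[ℝ] (Fin (n+1) → ℝ))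
        (LinearMap.id)) ∘ₗ (LinearEquiv.prodAssoc ℝ ℝ (Fin n → ℝ) F).symm.toLinearMap
      with hL
    have hLapp : ∀ (a : ℝ) (x : Fin n → ℝ) (y : F),
        L (a, (x, y)) = ((piFinSuccLinear n).symm (a, x), y) := fun a x y => rfl
    have hu : IsPolyL {z : (Fin n → ℝ) × F | ∃ a : ℝ, (a, z) ∈ L ⁻¹' s} :=
      IsPolyL.proj (hs.preimage L)
    have := ih hu
    convert this using 1
    ext y
    simp only [mem_setOf_eq, mem_preimage]
    constructor
    · rintro ⟨x, hx⟩
      refine ⟨fun i => x i.succ, x 0, ?_⟩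
      rw [hLapp]
      convert hx using 2
      have : (piFinSuccLinear n) x = (x 0, fun i => x i.succ) := rfl
      rw [← this, LinearEquiv.symm_apply_apply]
    · rintro ⟨x, a, hx⟩
      rw [hLapp] at hx
      exact ⟨(piFinSuccLinear n).symm (a, x), hx⟩

lemma IsPolyL.image_equiv {s : Set E} (hs : IsPolyL s) (e : E ≃ₗ[ℝ] F) :
    IsPolyL (e '' s) := by
  have : ⇑e '' s = ⇑e.symm ⁻¹' s := by
    ext y
    simp only [mem_image, mem_preimage]
    constructor
    · rintro ⟨x, hx, rfl⟩; simpa using hx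
    · intro h; exact ⟨e.symm y, h, by simp⟩
  rw [this]
  exact hs.preimage (e.symm : F →ₗ[ℝ] E)

/-- In a finite-dimensional space, every submodule is a polyhedron. -/
lemma Submodule.isPolyL [FiniteDimensional ℝ E] (R : Submodule ℝ E) :
    IsPolyL (R : Set E) := by
  classical
  have : FiniteDimensional ℝ (E ⧸ R) := inferInstance
  set b := Module.finBasis ℝ (E ⧸ R)
  refine ⟨Fin (Module.finrank ℝ (E ⧸ R)) ⊕ Fin (Module.finrank ℝ (E ⧸ R)), inferInstance,
    Sum.elim (fun k => (b.coord k).comp R.mkQ) (fun k => -((b.coord k).comp R.mkQ)),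
    Sum.elim (fun _ => 0) (fun _ => 0), ?_⟩
  ext x
  simp only [SetLike.mem_coe, mem_setOf_eq, Sum.forall, Sum.elim_inl, Sum.elim_inr,
    LinearMap.coe_comp, Function.comp_apply, LinearMap.neg_apply, neg_le, neg_zero]
  constructor
  · intro hx
    have : R.mkQ x = 0 := by rwa [Submodule.mkQ_apply, Submodule.Quotient.mk_eq_zero]
    simp [this]
  · rintro ⟨h1, h2⟩
    have : ∀ k, b.coord k (R.mkQ x) = 0 := fun k => le_antisymm (h1 k) (by linarith [h2 k])
    have hz : R.mkQ x = 0 := b.forall_coord_eq_zero_iff.1 this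
    rwa [Submodule.mkQ_apply, Submodule.Quotient.mk_eq_zero] at hz

/-- Image of a polyhedron under a linear map between finite-dimensional spaces is
a polyhedron. -/
lemma IsPolyL.image [FiniteDimensional ℝ E] [FiniteDimensional ℝ F]
    {Q : Set E} (hQ : IsPolyL Q) (A : E →ₗ[ℝ] F) : IsPolyL (A '' Q) := by
  classical
  set bF := Module.finBasis ℝ F
  -- graph set
  set G : Set (E × F) := ((LinearMap.fst ℝ E F) ⁻¹' Q) ∩
      {p | ∀ k, bF.coord k (A p.1 - p.2) = 0} with hG
  have hGpoly : IsPolyL G := by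
    refine (hQ.preimage _).inter ?_
    have : {p : E × F | ∀ k, bF.coord k (A p.1 - p.2) = 0} =
        ⋂ k, {p : E × F | ((bF.coord k).comp ((A.comp (LinearMap.fst ℝ E F)) -
          LinearMap.snd ℝ E F)) p ≤ 0 ∧
          -(((bF.coord k).comp ((A.comp (LinearMap.fst ℝ E F)) -
          LinearMap.snd ℝ E F)) p) ≤ 0} := by
      ext p
      simp only [mem_setOf_eq, mem_iInter, LinearMap.coe_comp, Function.comp_apply,
        LinearMap.sub_apply, LinearMap.fst_apply, LinearMap.snd_apply, neg_le, neg_zero]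
      constructor
      · intro h k; rw [h k]; exact ⟨le_rfl, le_rfl⟩
      · intro h k; exact le_antisymm (h k).1 (h k).2
    rw [this]
    refine isPolyL_iInter fun k => ?_
    refine ⟨Fin 2, inferInstance, ![(bF.coord k).comp ((A.comp (LinearMap.fst ℝ E F)) -
      LinearMap.snd ℝ E F), -((bF.coord k).comp ((A.comp (LinearMap.fst ℝ E F)) -
      LinearMap.snd ℝ E F))], ![0, 0], ?_⟩
    ext p
    simp [Fin.forall_fin_two]
  have himg : A '' Q = {y | ∃ x, (x, y) ∈ G} := by
    ext y
    simp only [mem_image, mem_setOf_eq, hG, mem_inter_iff, mem_preimage,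
      LinearMap.fst_apply]
    constructor
    · rintro ⟨x, hx, rfl⟩
      exact ⟨x, hx, fun k => by simp⟩
    · rintro ⟨x, hx, hk⟩
      refine ⟨x, hx, ?_⟩
      have : A x - y = 0 := bF.forall_coord_eq_zero_iff.1 hk
      exact sub_eq_zero.1 this
  rw [himg]
  -- transfer E to Fin n → ℝ
  set eE := (Module.finBasis ℝ E).equivFun
  set G' : Set ((Fin (Module.finrank ℝ E) → ℝ) × F) :=
    (LinearMap.prodMap (eE.symm : (Fin (Module.finrank ℝ E) → ℝ) →ₗ[ℝ] E)
      (LinearMap.id (R := ℝ) (M := F))) ⁻¹' G with hG'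
  have hG'poly : IsPolyL G' := hGpoly.preimage _
  have : {y | ∃ x, (x, y) ∈ G} = {y | ∃ v, (v, y) ∈ G'} := by
    ext y
    simp only [mem_setOf_eq, hG', mem_preimage, LinearMap.prodMap_apply, LinearMap.id_apply,
      LinearEquiv.coe_coe]
    constructor
    · rintro ⟨x, hx⟩
      exact ⟨eE x, by simpa using hx⟩
    · rintro ⟨v, hv⟩
      exact ⟨eE.symm v, hv⟩
  rw [this]
  exact isPolyL_exists_pi hG'poly

end PolyL

open Set Pointwise

section Topo

variable {X : Type*} [AddCommGroup X] [Module ℝ X] [TopologicalSpace X]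
  [IsTopologicalAddGroup X] [ContinuousSMul ℝ X] [T2Space X]

/-- The sup of a closed submodule and a finite-dimensional submodule is closed. -/
lemma isClosed_sup_fd (L M : Submodule ℝ X) (hL : IsClosed (L : Set X))
    [FiniteDimensional ℝ M] : IsClosed ((L ⊔ M : Submodule ℝ X) : Set X) := by
  haveI : IsClosed ((L : Set X)) := hL
  have hcont : Continuous L.mkQ := continuous_quot_mk
  set M' : Submodule ℝ (X ⧸ L) := M.map L.mkQ with hM'
  haveI : FiniteDimensional ℝ M' := Module.Finite.map M L.mkQ
  have hclosed : IsClosed (M' : Set (X ⧸ L)) := M'.closed_of_finiteDimensional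
  have hkey : ((L ⊔ M : Submodule ℝ X) : Set X) = L.mkQ ⁻¹' (M' : Set (X ⧸ L)) := by
    ext x
    simp only [SetLike.mem_coe, mem_preimage, hM', Submodule.mem_map]
    constructor
    · intro hx
      obtain ⟨z, hz, w, hw, rfl⟩ := Submodule.mem_sup.1 hx
      refine ⟨w, hw, ?_⟩
      rw [map_add]
      have : L.mkQ z = 0 := by rwa [Submodule.mkQ_apply, Submodule.Quotient.mk_eq_zero]
      rw [this, zero_add]
    · rintro ⟨w, hw, hwx⟩
      have : x - w ∈ L := by
        rw [← Submodule.ker_mkQ L, LinearMap.mem_ker, map_sub, hwx, sub_self]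
      have hx : x = (x - w) + w := (sub_add_cancel x w).symm
      rw [hx]
      exact Submodule.add_mem_sup this hw
  rw [hkey]
  exact hclosed.preimage hcont

variable [LocallyConvexSpace ℝ X]

/-- Extension of a linear functional from a finite-dimensional subspace `M₁`
transverse to a closed subspace `L`, vanishing on `L`. -/
lemma exists_extension_vanishing (L M₁ : Submodule ℝ X) (hL : IsClosed (L : Set X))
    [FiniteDimensional ℝ M₁] (hML : M₁ ⊓ L = ⊥) (g : M₁ →ₗ[ℝ] ℝ) :
    ∃ h : X →L[ℝ] ℝ, (∀ v : M₁, h v = g v) ∧ (∀ z ∈ L, h z = 0) := by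
  classical
  set r := Module.finrank ℝ M₁
  set b := Module.finBasis ℝ M₁ with hb
  -- the dual family
  have hψ : ∀ k : Fin r, ∃ ψ : X →L[ℝ] ℝ,
      ψ (b k) = 1 ∧ (∀ l, l ≠ k → ψ (b l) = 0) ∧ ∀ z ∈ L, ψ z = 0 := by
    intro k
    set C : Submodule ℝ X := L ⊔ Submodule.span ℝ (M₁.subtype '' (b '' {l | l ≠ k})) with hC
    haveI : FiniteDimensional ℝ (Submodule.span ℝ (M₁.subtype '' (b '' {l | l ≠ k}))) := by
      apply FiniteDimensional.span_of_finite
      exact ((Set.finite_range b).subset (image_subset_range _ _)).image _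
    have hCclosed : IsClosed (C : Set X) := isClosed_sup_fd L _ hL
    have hnot : ((b k : M₁) : X) ∉ (C : Set X) := by
      intro hmem
      obtain ⟨z, hz, w, hw, hzw⟩ := Submodule.mem_sup.1 hmem
      -- w ∈ M₁
      have hspan_le : Submodule.span ℝ (M₁.subtype '' (b '' {l | l ≠ k})) ≤ M₁ := by
        rw [Submodule.span_le]
        rintro _ ⟨v, _, rfl⟩
        exact (v : M₁).2
      have hwM : w ∈ M₁ := hspan_le hw
      have hdiff : ((b k : M₁) : X) - w ∈ M₁ ⊓ L := by
        constructor
        · exact Submodule.sub_mem _ (b k).2 hwM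
        · have : ((b k : M₁) : X) - w = z := by rw [← hzw]; abel
          rw [this]; exact hz
      rw [hML, Submodule.mem_bot, sub_eq_zero] at hdiff
      -- so b k ∈ span of the other basis vectors
      rw [Submodule.span_image] at hw
      rw [← hdiff] at hw
      obtain ⟨u, hu, huk⟩ := Submodule.mem_map.1 hw
      have : u = b k := Subtype.coe_injective huk
      rw [this] at hu
      exact b.linearIndependent.notMem_span_image (by simp) hu
    obtain ⟨f, u, hfk, hfC⟩ :=
      geometric_hahn_banach_point_closed (Submodule.convex C) hCclosed hnot
    -- f vanishes on C
    have hvan : ∀ c ∈ C, f c = 0 := by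
      intro c hc
      by_contra hne
      have : ∀ t : ℝ, u < t * f c := by
        intro t
        have := hfC (t • c) (Submodule.smul_mem _ t hc)
        simpa using this
      rcases lt_or_gt_of_ne hne with hneg | hpos
      · have := this ((u - 1) / f c)
        rw [div_mul_cancel₀ _ (ne_of_lt hneg)] at this
        linarith
      · have := this ((u - 1) / f c)
        rw [div_mul_cancel₀ _ (ne_of_gt hpos)] at this
        linarith
    have hu0 : u < 0 := by simpa using hfC 0 (Submodule.zero_mem C)
    have hfkne : f (b k) ≠ 0 := by
      intro h0
      rw [h0] at hfk
      linarith
    refine ⟨(f ((b k : M₁) : X))⁻¹ • f, ?_, ?_, ?_⟩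
    · simp [inv_mul_cancel₀ hfkne]
    · intro l hl
      have hmem : ((b l : M₁) : X) ∈ C :=
        Submodule.mem_sup_right (Submodule.subset_span ⟨b l, ⟨l, hl, rfl⟩, rfl⟩)
      simp [hvan _ hmem]
    · intro z hz
      simp [hvan z (Submodule.mem_sup_left hz)]
  choose ψ hψ1 hψ2 hψL using hψ
  refine ⟨∑ k, g (b k) • ψ k, ?_, ?_⟩
  · intro v
    have hv : (v : X) = ∑ l, b.repr v l • ((b l : M₁) : X) := by
      conv_lhs => rw [← b.sum_repr v]
      push_cast
      rfl
    have hψv : ∀ k, ψ k (v : X) = b.repr v k := by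
      intro k
      rw [hv, map_sum]
      rw [Finset.sum_eq_single k]
      · simp [hψ1 k]
      · intro l _ hl
        simp [hψ2 k l hl]
      · intro h; exact absurd (Finset.mem_univ k) h
    have hgv : g v = ∑ k, b.repr v k * g (b k) := by
      conv_lhs => rw [← b.sum_repr v]
      rw [map_sum]
      simp [mul_comm]
    simp only [ContinuousLinearMap.coe_sum', Finset.sum_apply, ContinuousLinearMap.coe_smul',
      Pi.smul_apply, smul_eq_mul]
    rw [hgv]
    refine Finset.sum_congr rfl fun k _ => ?_
    rw [hψv k]; ring
  · intro z hz
    simp only [ContinuousLinearMap.coe_sum', Finset.sum_apply, ContinuousLinearMap.coe_smul',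
      Pi.smul_apply, smul_eq_mul]
    refine Finset.sum_eq_zero fun k _ => ?_
    rw [hψL k z hz]; ring

end Topo

section Assembly

variable {X : Type*} [AddCommGroup X] [Module ℝ X] [TopologicalSpace X]
  [IsTopologicalAddGroup X] [ContinuousSMul ℝ X] [T2Space X]

lemma vadd_set_eq_image (a : X) (s : Set X) : a +ᵥ s = (fun y => a + y) '' s := rfl

lemma isClosed_vadd' (a : X) {s : Set X} (hs : IsClosed s) : IsClosed (a +ᵥ s) := by
  rw [vadd_set_eq_image]
  exact (Homeomorph.addLeft a).isClosedMap s hs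

lemma closure_vadd' (a : X) (s : Set X) : closure (a +ᵥ s) = a +ᵥ closure s := by
  rw [vadd_set_eq_image, vadd_set_eq_image]
  exact ((Homeomorph.addLeft a).image_closure s).symm

lemma vadd_set_eq_singleton_add (a : X) (s : Set X) : a +ᵥ s = {a} + s := by
  rw [Set.singleton_add]
  rfl

/-- Structure theorem for generalized polyhedral convex sets. -/
lemma IsGPCS.decomp {D : Set X} (h : IsGPCS D) :
    ∃ (p : ℕ) (S : (Fin p → ℝ) →ₗ[ℝ] X) (Q : Set (Fin p → ℝ)) (a : X) (K : Submodule ℝ X),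
      IsPolyL Q ∧ IsClosed (K : Set X) ∧ D = a +ᵥ (S '' Q + (K : Set X)) := by
  classical
  obtain ⟨p, f, α, x₀, W, hWc, hD⟩ := h
  -- W is closed
  have hWclosed : IsClosed (W : Set X) := by
    have : (W : Set X) = (-x₀) +ᵥ (x₀ +ᵥ (W : Set X)) := by
      rw [vadd_vadd, neg_add_cancel, zero_vadd]
    rw [this]
    exact isClosed_vadd' _ hWc
  set φ : X →ₗ[ℝ] (Fin p → ℝ) := LinearMap.pi (fun j => (f j : X →ₗ[ℝ] ℝ)) with hφ
  have hφapp : ∀ (x : X) (j : Fin p), φ x j = f j x := fun x j => rfl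
  set φW : ↥W →ₗ[ℝ] (Fin p → ℝ) := φ ∘ₗ W.subtype with hφW
  set R : Submodule ℝ (Fin p → ℝ) := LinearMap.range φW with hR
  obtain ⟨σ, hσ⟩ := φW.rangeRestrict.exists_rightInverse_of_surjective
    (LinearMap.range_eq_top.2 φW.surjective_rangeRestrict)
  obtain ⟨R', hRR'⟩ := R.exists_isCompl
  set pr : (Fin p → ℝ) →ₗ[ℝ] ↥R := R.linearProjOfIsCompl R' hRR' with hpr
  set S : (Fin p → ℝ) →ₗ[ℝ] X := W.subtype ∘ₗ σ ∘ₗ pr with hS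
  set β : Fin p → ℝ := fun j => α j - f j x₀ with hβ
  set Q : Set (Fin p → ℝ) := (R : Set (Fin p → ℝ)) ∩ ⋂ j, {y | y j ≤ β j} with hQ
  set K : Submodule ℝ X := W ⊓ ⨅ j, LinearMap.ker (f j : X →ₗ[ℝ] ℝ) with hK
  have hQpoly : IsPolyL Q := by
    refine (R.isPolyL).inter (isPolyL_iInter fun j => ?_)
    exact ⟨Unit, inferInstance, fun _ => LinearMap.proj j, fun _ => β j, by ext y; simp⟩
  have hKclosed : IsClosed (K : Set X) := by
    have : (K : Set X) = (W : Set X) ∩ ⋂ j, (LinearMap.ker (f j : X →ₗ[ℝ] ℝ) : Set X) := by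
      rw [hK, Submodule.coe_inf, Submodule.coe_iInf]
    rw [this]
    exact hWclosed.inter (isClosed_iInter fun j => ContinuousLinearMap.isClosed_ker (f j))
  -- key : φ (S y) = y for y ∈ R
  have hφS : ∀ y ∈ R, φ (S y) = y := by
    intro y hy
    have h1 : pr y = ⟨y, hy⟩ := R.linearProjOfIsCompl_apply_left hRR' ⟨y, hy⟩
    have h2 : φW.rangeRestrict (σ ⟨y, hy⟩) = ⟨y, hy⟩ := by
      have := LinearMap.congr_fun hσ ⟨y, hy⟩
      exact this
    have h3 : φW (σ ⟨y, hy⟩) = y := congrArg Subtype.val h2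
    rw [hS]
    simp only [LinearMap.coe_comp, Function.comp_apply]
    rw [h1]
    exact h3
  have hSW : ∀ y, S y ∈ W := fun y => (σ (pr y)).2
  refine ⟨p, S, Q, x₀, K, hQpoly, hKclosed, ?_⟩
  rw [hD]
  ext x
  simp only [Set.mem_setOf_eq, Set.mem_vadd_set, vadd_eq_add]
  constructor
  · rintro ⟨⟨w, hwW, rfl⟩, hfx⟩
    -- here x = x₀ + w
    set y : Fin p → ℝ := φ w with hy
    have hyR : y ∈ R := ⟨⟨w, hwW⟩, rfl⟩
    have hyQ : y ∈ Q := by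
      refine ⟨hyR, Set.mem_iInter.2 fun j => ?_⟩
      have := hfx j
      simp only [Set.mem_setOf_eq, hy, hφapp]
      simp only [map_add] at this
      simp only [hβ]
      linarith
    have hk : w - S y ∈ K := by
      constructor
      · exact Submodule.sub_mem _ hwW (hSW y)
      · refine Submodule.mem_iInf _ |>.2 fun j => ?_
        rw [LinearMap.mem_ker]
        have : φ (w - S y) = 0 := by
          rw [map_sub, hφS y hyR, sub_self]
        have := congrFun this j
        rwa [hφapp] at this
    refine ⟨S y + (w - S y), ?_, by abel⟩
    exact Set.mem_add.2 ⟨S y, ⟨y, hyQ, rfl⟩, w - S y, hk, rfl⟩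
  · rintro ⟨w, hw, rfl⟩
    obtain ⟨_, ⟨y, hyQ, rfl⟩, k, hk, rfl⟩ := Set.mem_add.1 hw
    obtain ⟨hyR, hyb⟩ := hyQ
    have hxW : S y + k ∈ W := Submodule.add_mem _ (hSW y) hk.1
    refine ⟨⟨S y + k, hxW, rfl⟩, fun j => ?_⟩
    have hfk : f j k = 0 := by
      have h2 : k ∈ (⨅ j, LinearMap.ker (f j : X →ₗ[ℝ] ℝ) : Submodule ℝ X) := hk.2
      rw [Submodule.mem_iInf] at h2
      exact LinearMap.mem_ker.1 (h2 j)
    have hfS : f j (S y) = y j := by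
      have := congrFun (hφS y hyR) j
      rwa [hφapp] at this
    have hyj : y j ≤ β j := by
      have := Set.mem_iInter.1 hyb j
      exact this
    simp only [map_add, hfk, hfS, hβ] at *
    linarith

lemma add_closure_subset_closure_add (A B : Set X) :
    A + closure B ⊆ closure (A + B) := by
  rintro x hx
  obtain ⟨a', ha', b, hb, rfl⟩ := Set.mem_add.1 hx
  have h1 : a' + b ∈ (fun y => a' + y) '' closure B := ⟨b, hb, rfl⟩
  have h2 : (fun y => a' + y) '' closure B ⊆ closure ((fun y => a' + y) '' B) :=
    image_closure_subset_closure_image (continuous_add_left a')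
  refine closure_mono ?_ (h2 h1)
  rintro _ ⟨b', hb', rfl⟩
  exact Set.mem_add.2 ⟨a', ha', b', hb', rfl⟩

variable [LocallyConvexSpace ℝ X]

/-- The closure of `a +ᵥ (S '' Q + K)` is a generalized polyhedral convex set,
for `S` linear with finite-dimensional domain, `Q` a polyhedron and `K` a submodule. -/
lemma isGPCS_closure_aux {E : Type*} [AddCommGroup E] [Module ℝ E] [FiniteDimensional ℝ E]
    (S : E →ₗ[ℝ] X) {Q : Set E} (hQ : IsPolyL Q) (a : X) (K : Submodule ℝ X) :
    IsGPCS (closure (a +ᵥ (S '' Q + (K : Set X)))) := by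
  classical
  set L : Submodule ℝ X := K.topologicalClosure with hLdef
  have hLc : IsClosed (L : Set X) := K.isClosed_topologicalClosure
  have hKL : K ≤ L := K.le_topologicalClosure
  set M : Submodule ℝ X := LinearMap.range S with hMdef
  haveI : FiniteDimensional ℝ M := inferInstance
  set N : Submodule ℝ M := (M ⊓ L).comap M.subtype with hNdef
  obtain ⟨N₁, hN₁⟩ := N.exists_isCompl
  set prN₁ : ↥M →ₗ[ℝ] ↥N₁ := N₁.linearProjOfIsCompl N hN₁.symm with hprN₁
  set M₁ : Submodule ℝ X := N₁.map M.subtype with hM₁def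
  haveI : FiniteDimensional ℝ M₁ := Module.Finite.map N₁ M.subtype
  set eqv : ↥N₁ ≃ₗ[ℝ] ↥M₁ := Submodule.equivMapOfInjective M.subtype M.injective_subtype N₁
    with heqv
  set T : E →ₗ[ℝ] ↥M₁ := (eqv : ↥N₁ →ₗ[ℝ] ↥M₁) ∘ₗ prN₁ ∘ₗ S.rangeRestrict with hT
  -- decomposition of elements of M
  have hdec : ∀ v : ↥M, ∃ z ∈ L, (v : X) = ((eqv (prN₁ v) : ↥M₁) : X) + z := by
    intro v
    have hsum := Submodule.projection_add_projection_eq_self hN₁.symm v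
    set P₀ := N.linearProjOfIsCompl N₁ hN₁.symm.symm with hP₀
    refine ⟨((P₀ v : ↥M) : X), ?_, ?_⟩
    · have hmem : ((P₀ v : ↥M) : X) ∈ M ⊓ L := (P₀ v).2
      exact hmem.2
    · have hco : ((eqv (prN₁ v) : ↥M₁) : X) = ((prN₁ v : ↥M) : X) :=
        Submodule.coe_equivMapOfInjective_apply _ _ _ _
      rw [hco]
      have hsumX := congrArg (fun u : ↥M => (u : X)) hsum
      simp only [Submodule.coe_add] at hsumX
      exact hsumX.symm
  -- the polyhedron in M₁
  have hR' : IsPolyL (T '' Q) := hQ.image T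
  obtain ⟨ι, instι, g, γ, hRrep⟩ := hR'
  haveI : Fintype ι := instι
  have hM₁L : M₁ ⊓ L = ⊥ := by
    rw [eq_bot_iff]
    rintro x ⟨hx1, hxL⟩
    obtain ⟨u, huN₁, rfl⟩ := Submodule.mem_map.1 hx1
    have huN : u ∈ N := Submodule.mem_comap.2 ⟨u.2, hxL⟩
    have hu : u ∈ N ⊓ N₁ := ⟨huN, huN₁⟩
    rw [hN₁.inf_eq_bot, Submodule.mem_bot] at hu
    rw [hu]
    simp
  have hext := fun j => exists_extension_vanishing L M₁ hLc hM₁L (g j)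
  choose h hgh hhL using hext
  set W : Submodule ℝ X := L ⊔ M₁ with hWdef
  have hWclosed : IsClosed (W : Set X) := isClosed_sup_fd L M₁ hLc
  set C : Set X := {x ∈ (W : Set X) | ∀ j, h j x ≤ γ j} with hCdef
  -- C = M₁.subtype '' (T '' Q) + L
  have claim1 : C = M₁.subtype '' (T '' Q) + (L : Set X) := by
    ext x
    constructor
    · rintro ⟨hxW, hxj⟩
      obtain ⟨z, hz, w, hw, rfl⟩ := Submodule.mem_sup.1 hxW
      have hval : ∀ j, h j (z + w) = g j ⟨w, hw⟩ := by
        intro j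
        rw [map_add, hhL j z hz, zero_add]
        exact hgh j ⟨w, hw⟩
      have hwR : (⟨w, hw⟩ : ↥M₁) ∈ T '' Q := by
        rw [hRrep]
        intro j
        have := hxj j
        rwa [hval j] at this
      exact Set.mem_add.2 ⟨w, ⟨⟨w, hw⟩, hwR, rfl⟩, z, hz, by abel⟩
    · intro hx
      obtain ⟨_, ⟨v, hv, rfl⟩, z, hz, rfl⟩ := Set.mem_add.1 hx
      constructor
      · exact Submodule.add_mem _ (Submodule.mem_sup_right v.2) (Submodule.mem_sup_left hz)
      · intro j
        rw [Submodule.coe_subtype, map_add, hhL j z hz, add_zero, hgh j v]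
        rw [hRrep] at hv
        exact hv j
  -- S '' Q + K ⊆ C
  have claim2 : S '' Q + (K : Set X) ⊆ C := by
    intro x hx
    obtain ⟨_, ⟨y, hyQ, rfl⟩, k, hk, rfl⟩ := Set.mem_add.1 hx
    obtain ⟨z, hz, hSy⟩ := hdec (S.rangeRestrict y)
    have hSy' : S y = ((T y : ↥M₁) : X) + z := by
      have : ((S.rangeRestrict y : ↥M) : X) = S y := rfl
      rw [← this]
      exact hSy
    rw [claim1]
    refine Set.mem_add.2 ⟨((T y : ↥M₁) : X), ⟨T y, ⟨y, hyQ, rfl⟩, rfl⟩, z + k, ?_, ?_⟩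
    · exact Submodule.add_mem _ hz (hKL hk)
    · rw [hSy']; abel
  -- C ⊆ closure (S '' Q + K)
  have claim3 : C ⊆ closure (S '' Q + (K : Set X)) := by
    rw [claim1]
    intro x hx
    obtain ⟨_, ⟨v, hvR, rfl⟩, z, hz, rfl⟩ := Set.mem_add.1 hx
    obtain ⟨y, hyQ, rfl⟩ := hvR
    obtain ⟨z₀, hz₀, hSy⟩ := hdec (S.rangeRestrict y)
    have hSy' : ((T y : ↥M₁) : X) = S y - z₀ := by
      have h0 : ((S.rangeRestrict y : ↥M) : X) = S y := rfl
      rw [← h0, hSy]; abel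
    have hmem : ((T y : ↥M₁) : X) + z ∈ S '' Q + closure (K : Set X) := by
      refine Set.mem_add.2 ⟨S y, ⟨y, hyQ, rfl⟩, z - z₀, ?_, by rw [hSy']; abel⟩
      rw [← Submodule.topologicalClosure_coe]
      exact Submodule.sub_mem L hz hz₀
    exact add_closure_subset_closure_add _ _ hmem
  have hCclosed : IsClosed C := by
    have : C = (W : Set X) ∩ ⋂ j, {x | h j x ≤ γ j} := by
      ext x; simp [hCdef, Set.mem_iInter]
    rw [this]
    exact hWclosed.inter (isClosed_iInter fun j =>
      isClosed_le (h j).continuous continuous_const)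
  have hclosure : closure (S '' Q + (K : Set X)) = C :=
    le_antisymm (closure_minimal claim2 hCclosed) claim3
  rw [closure_vadd', hclosure]
  -- final GPCS representation
  set e := Fintype.equivFin ι
  refine ⟨Fintype.card ι, fun k => h (e.symm k), fun k => γ (e.symm k) + h (e.symm k) a,
    a, W, isClosed_vadd' a hWclosed, ?_⟩
  ext x
  simp only [Set.mem_vadd_set, vadd_eq_add, Set.mem_setOf_eq]
  constructor
  · rintro ⟨y, ⟨hyW, hyj⟩, rfl⟩
    refine ⟨⟨y, hyW, rfl⟩, fun k => ?_⟩
    rw [map_add]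
    have := hyj (e.symm k)
    linarith
  · rintro ⟨⟨y, hyW, rfl⟩, hxj⟩
    refine ⟨y, ⟨hyW, fun j => ?_⟩, rfl⟩
    have := hxj (e j)
    rw [map_add, e.symm_apply_apply] at this
    linarith

end Assembly

section SumHelpers

open Finset in
lemma mem_finset_sum_sets {ι α : Type*} [DecidableEq ι] [AddCommMonoid α]
    (t : Finset ι) (A : ι → Set α) (x : α) :
    x ∈ ∑ i ∈ t, A i ↔ ∃ c : ι → α, (∀ i ∈ t, c i ∈ A i) ∧ x = ∑ i ∈ t, c i := by
  classical
  induction t using Finset.induction_on generalizing x with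
  | empty =>
    simp only [Finset.sum_empty, Finset.notMem_empty, false_implies, implies_true, true_and]
    constructor
    · intro h
      exact ⟨fun _ => 0, by simpa using h⟩
    · rintro ⟨c, rfl⟩
      simp
  | @insert b u hb ih =>
    rw [Finset.sum_insert hb, Set.mem_add]
    constructor
    · rintro ⟨v, hv, z, hz, rfl⟩
      obtain ⟨c, hc, rfl⟩ := (ih z).1 hz
      refine ⟨Function.update c b v, fun i hi => ?_, ?_⟩
      · rcases Finset.mem_insert.1 hi with rfl | hit
        · rw [Function.update_self]; exact hv
        · rw [Function.update_of_ne (ne_of_mem_of_not_mem hit hb)]; exact hc i hit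
      · rw [Finset.sum_insert hb, Function.update_self]
        congr 1
        exact (Finset.sum_congr rfl fun i hi =>
          (Function.update_of_ne (ne_of_mem_of_not_mem hi hb) _ _)).symm
    · rintro ⟨c, hc, rfl⟩
      rw [Finset.sum_insert hb]
      exact ⟨c b, hc b (Finset.mem_insert_self b u), ∑ i ∈ u, c i,
        (ih _).2 ⟨c, fun i hi => hc i (Finset.mem_insert_of_mem hi), rfl⟩, rfl⟩

variable {X : Type*} [AddCommGroup X] [Module ℝ X]

lemma coe_submodule_add (P R : Submodule ℝ X) :
    ((P + R : Submodule ℝ X) : Set X) = (P : Set X) + (R : Set X) := by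
  ext x
  rw [Submodule.add_eq_sup]
  constructor
  · intro hx
    obtain ⟨y, hy, z, hz, rfl⟩ := Submodule.mem_sup.1 hx
    exact Set.mem_add.2 ⟨y, hy, z, hz, rfl⟩
  · intro hx
    obtain ⟨y, hy, z, hz, rfl⟩ := Set.mem_add.1 hx
    exact Submodule.add_mem_sup hy hz

lemma coe_finset_sum_submodule {ι : Type*} (t : Finset ι) (K : ι → Submodule ℝ X) :
    ((∑ i ∈ t, K i : Submodule ℝ X) : Set X) = ∑ i ∈ t, (K i : Set X) := by
  classical
  induction t using Finset.induction_on with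
  | empty =>
    simp only [Finset.sum_empty]
    ext x
    simp [Submodule.zero_eq_bot, Set.mem_zero]
  | @insert b u hb ih =>
    rw [Finset.sum_insert hb, Finset.sum_insert hb, coe_submodule_add, ih]

lemma finset_sum_singleton_sets {ι : Type*} (t : Finset ι) (a : ι → X) :
    (∑ i ∈ t, ({a i} : Set X)) = {∑ i ∈ t, a i} := by
  classical
  induction t using Finset.induction_on with
  | empty => simp only [Finset.sum_empty]; ext x; simp [Set.mem_zero]
  | @insert b u hb ih =>
    rw [Finset.sum_insert hb, Finset.sum_insert hb, ih, Set.singleton_add_singleton]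

end SumHelpers

/-- The closure of the Minkowski sum of finitely many nonempty generalized
polyhedral convex sets is a generalized polyhedral convex set. -/
theorem closure_sum_isGPCS {X : Type*} [AddCommGroup X] [Module ℝ X] [TopologicalSpace X]
    [IsTopologicalAddGroup X] [ContinuousSMul ℝ X] [LocallyConvexSpace ℝ X] [T2Space X]
    (m : ℕ) (D : Fin m → Set X) (hD : ∀ i, IsGPCS (D i)) (hne : ∀ i, (D i).Nonempty) :
    IsGPCS (closure (∑ i, D i)) := by
  classical
  choose p S Q a K hQ hK hDeq using fun i => (hD i).decomp
  set Scomb : (∀ i, Fin (p i) → ℝ) →ₗ[ℝ] X := ∑ i, (S i).comp (LinearMap.proj i) with hScomb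
  set Qcomb : Set (∀ i, Fin (p i) → ℝ) := Set.univ.pi Q with hQcomb
  have hQcombPoly : IsPolyL Qcomb := by
    have : Qcomb = ⋂ i, (LinearMap.proj i : (∀ i, Fin (p i) → ℝ) →ₗ[ℝ] (Fin (p i) → ℝ)) ⁻¹' Q i := by
      ext y
      simp [hQcomb, Set.mem_univ_pi]
    rw [this]
    exact isPolyL_iInter fun i => (hQ i).preimage _
  have himg : ∑ i, (S i '' Q i) = Scomb '' Qcomb := by
    ext x
    rw [mem_finset_sum_sets]
    constructor
    · rintro ⟨c, hc, rfl⟩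
      choose q hq hSq using fun i => hc i (Finset.mem_univ i)
      refine ⟨q, fun i _ => hq i, ?_⟩
      simp only [hScomb, LinearMap.sum_apply, LinearMap.coe_comp, Function.comp_apply,
        LinearMap.proj_apply]
      exact Finset.sum_congr rfl fun i _ => hSq i
    · rintro ⟨y, hy, rfl⟩
      refine ⟨fun i => S i (y i), fun i _ => ⟨y i, hy i (Set.mem_univ i), rfl⟩, ?_⟩
      simp only [hScomb, LinearMap.sum_apply, LinearMap.coe_comp, Function.comp_apply,
        LinearMap.proj_apply]
  have hsum : ∑ i, D i =
      (∑ i, a i) +ᵥ (Scomb '' Qcomb + ((∑ i, K i : Submodule ℝ X) : Set X)) := by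
    calc ∑ i, D i = ∑ i, ({a i} + (S i '' Q i + (K i : Set X))) := by
          refine Finset.sum_congr rfl fun i _ => ?_
          rw [hDeq i, vadd_set_eq_singleton_add]
      _ = (∑ i, ({a i} : Set X)) + ∑ i, (S i '' Q i + (K i : Set X)) :=
          Finset.sum_add_distrib
      _ = (∑ i, ({a i} : Set X)) + ((∑ i, (S i '' Q i)) + ∑ i, ((K i : Set X))) := by
          rw [Finset.sum_add_distrib]
      _ = {∑ i, a i} + (Scomb '' Qcomb + ((∑ i, K i : Submodule ℝ X) : Set X)) := by
          rw [finset_sum_singleton_sets, himg, coe_finset_sum_submodule]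
      _ = (∑ i, a i) +ᵥ (Scomb '' Qcomb + ((∑ i, K i : Submodule ℝ X) : Set X)) :=
          (vadd_set_eq_singleton_add _ _).symm
  rw [hsum]
  exact isGPCS_closure_aux Scomb hQcombPoly (∑ i, a i) (∑ i, K i)
end

section
/- If D₁ ⊆ X is a polyhedral convex set and D₂ ⊆ X is a generalized polyhedral convex set, then D₁ + D₂ is a polyhedral convex set. -/
open Pointwise

open Finset


lemma aux_div {ci cj ai aj : ℝ} (hci : 0 < ci) (hcj : cj < 0) (h : cj * ai ≤ ci * aj) :
    aj / cj ≤ ai / ci := by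
  rw [div_le_iff_of_neg hcj, div_mul_eq_mul_div, div_le_iff₀ hci]
  nlinarith

lemma fm_real {ι : Type*} [Fintype ι] (c a : ι → ℝ) :
    (∃ s : ℝ, ∀ i, c i * s ≤ a i) ↔
      ((∀ i, c i = 0 → 0 ≤ a i) ∧
        ∀ i j, 0 < c i → c j < 0 → c j * a i ≤ c i * a j) := by
  classical
  constructor
  · rintro ⟨s, hs⟩
    refine ⟨fun i hi => by simpa [hi] using hs i, fun i j hi hj => ?_⟩
    nlinarith [hs i, hs j]
  · rintro ⟨h0, hpn⟩
    by_cases hN : (univ.filter fun j => c j < 0).Nonempty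
    · set s := (univ.filter fun j => c j < 0).sup' hN (fun j => a j / c j) with hsdef
      refine ⟨s, fun i => ?_⟩
      rcases lt_trichotomy (c i) 0 with h|h|h
      · have hm : i ∈ univ.filter (fun j => c j < 0) := by
          simp only [Finset.mem_filter, Finset.mem_univ, true_and]; exact h
        have h1 : a i / c i ≤ s := Finset.le_sup' (fun j => a j / c j) hm
        have := mul_le_mul_of_nonpos_left h1 h.le
        rwa [mul_div_cancel₀ _ h.ne] at this
      · simpa [h] using h0 i h
      · have h1 : s ≤ a i / c i := by
          apply Finset.sup'_le
          intro j hj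
          exact aux_div h (by simpa using hj) (hpn i j h (by simpa using hj))
        have := mul_le_mul_of_nonneg_left h1 h.le
        rwa [mul_div_cancel₀ _ h.ne'] at this
    · by_cases hP : (univ.filter fun i => 0 < c i).Nonempty
      · set s := (univ.filter fun i => 0 < c i).inf' hP (fun i => a i / c i) with hsdef
        refine ⟨s, fun i => ?_⟩
        rcases lt_trichotomy (c i) 0 with h|h|h
        · exact absurd ⟨i, by simp [h]⟩ hN
        · simpa [h] using h0 i h
        · have hm : i ∈ univ.filter (fun j => 0 < c j) := by
            simp only [Finset.mem_filter, Finset.mem_univ, true_and]; exact h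
          have h1 : s ≤ a i / c i := Finset.inf'_le (fun j => a j / c j) hm
          have := mul_le_mul_of_nonneg_left h1 h.le
          rwa [mul_div_cancel₀ _ h.ne'] at this
      · refine ⟨0, fun i => ?_⟩
        have hz : c i = 0 := by
          rcases lt_trichotomy (c i) 0 with h|h|h
          · exact absurd ⟨i, by simp [h]⟩ hN
          · exact h
          · exact absurd ⟨i, by simp [h]⟩ hP
        simpa [hz] using h0 i hz


lemma exists_fin_span {X : Type*} [AddCommGroup X] [Module ℝ X] {q : ℕ}
    (Φ : X →ₗ[ℝ] (Fin q → ℝ)) (W : Submodule ℝ X) :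
    ∃ (n : ℕ) (e : Fin n → X), (∀ k, e k ∈ W) ∧
      ∀ w ∈ W, ∃ t : Fin n → ℝ, Φ w = ∑ k, t k • Φ (e k) := by
  have hfg : (W.map Φ).FG := IsNoetherian.noetherian _
  rw [Submodule.fg_iff_exists_fin_generating_family] at hfg
  obtain ⟨n, b, hb⟩ := hfg
  have hbmem : ∀ k, b k ∈ W.map Φ := fun k => by
    rw [← hb]; exact Submodule.subset_span ⟨k, rfl⟩
  choose e he hΦe using fun k => Submodule.mem_map.mp (hbmem k)
  refine ⟨n, e, he, fun w hw => ?_⟩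
  have hmem : Φ w ∈ W.map Φ := ⟨w, hw, rfl⟩
  rw [← hb] at hmem
  obtain ⟨t, ht⟩ := (Submodule.mem_span_range_iff_exists_fun ℝ).mp hmem
  refine ⟨t, ?_⟩
  rw [← ht]
  exact Finset.sum_congr rfl fun k _ => by rw [hΦe]

section PolyEAux
variable {X : Type*} [AddCommGroup X] [Module ℝ X] [TopologicalSpace X]

/-- Polyhedral with `n` auxiliary existential real parameters. -/
def PolyE (n : ℕ) (S : Set X) : Prop :=
  ∃ (ι : Type) (_ : Fintype ι) (c : ι → Fin n → ℝ) (f : ι → (X →L[ℝ] ℝ)) (α : ι → ℝ),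
    S = {x | ∃ t : Fin n → ℝ, ∀ i, (∑ k, c i k * t k) + f i x ≤ α i}

lemma isPCS_of_family {ι : Type} [Fintype ι] (f : ι → (X →L[ℝ] ℝ)) (α : ι → ℝ) :
    IsPCS {x : X | ∀ i, f i x ≤ α i} := by
  refine ⟨Fintype.card ι, f ∘ (Fintype.equivFin ι).symm, α ∘ (Fintype.equivFin ι).symm, ?_⟩
  ext x
  simp only [Set.mem_setOf_eq, Function.comp_apply]
  exact ⟨fun h i => h _, fun h i => by simpa using h (Fintype.equivFin ι i)⟩

lemma polyE_zero {S : Set X} (h : PolyE 0 S) : IsPCS S := by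
  obtain ⟨ι, _, c, f, α, rfl⟩ := h
  have : {x : X | ∃ t : Fin 0 → ℝ, ∀ i, (∑ k, c i k * t k) + f i x ≤ α i}
      = {x : X | ∀ i, f i x ≤ α i} := by
    ext x
    simp
  rw [this]
  exact isPCS_of_family f α


lemma polyE_succ {n : ℕ} {S : Set X} (h : PolyE (n + 1) S) : PolyE n S := by
  classical
  obtain ⟨ι, _, c, f, α, rfl⟩ := h
  refine ⟨ι ⊕ ι × ι, inferInstance,
    Sum.elim (fun i => if c i (Fin.last n) = 0 then (fun k => c i k.castSucc) else 0)
      (fun ij => if 0 < c ij.1 (Fin.last n) ∧ c ij.2 (Fin.last n) < 0 then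
        (fun k => c ij.1 (Fin.last n) * c ij.2 k.castSucc - c ij.2 (Fin.last n) * c ij.1 k.castSucc) else 0),
    Sum.elim (fun i => if c i (Fin.last n) = 0 then f i else 0)
      (fun ij => if 0 < c ij.1 (Fin.last n) ∧ c ij.2 (Fin.last n) < 0 then
        c ij.1 (Fin.last n) • f ij.2 - c ij.2 (Fin.last n) • f ij.1 else 0),
    Sum.elim (fun i => if c i (Fin.last n) = 0 then α i else 0)
      (fun ij => if 0 < c ij.1 (Fin.last n) ∧ c ij.2 (Fin.last n) < 0 then
        c ij.1 (Fin.last n) * α ij.2 - c ij.2 (Fin.last n) * α ij.1 else 0), ?_⟩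
  ext x
  simp only [Set.mem_setOf_eq]
  constructor
  · rintro ⟨T, hT⟩
    refine ⟨fun k => T k.castSucc, ?_⟩
    -- verify new constraints from old ones
    have key : ∀ i, c i (Fin.last n) * T (Fin.last n) + ((∑ k : Fin n, c i k.castSucc * T k.castSucc) + f i x) ≤ α i := by
      intro i
      have h0 := hT i
      rw [Fin.sum_univ_castSucc] at h0
      linarith
    rintro (i | ⟨i, j⟩)
    · by_cases hz : c i (Fin.last n) = 0
      · simp only [Sum.elim_inl, if_pos hz]
        have := key i
        rw [hz] at this
        linarith
      · simp only [Sum.elim_inl, if_neg hz]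
        simp
    · by_cases hz : 0 < c i (Fin.last n) ∧ c j (Fin.last n) < 0
      · simp only [Sum.elim_inr, if_pos hz]
        have hi := key i
        have hj := key j
        have hsum : ∑ k : Fin n, (c i (Fin.last n) * c j k.castSucc - c j (Fin.last n) * c i k.castSucc) * T k.castSucc
            = c i (Fin.last n) * (∑ k : Fin n, c j k.castSucc * T k.castSucc)
              - c j (Fin.last n) * (∑ k : Fin n, c i k.castSucc * T k.castSucc) := by
          rw [Finset.mul_sum, Finset.mul_sum, ← Finset.sum_sub_distrib]
          exact Finset.sum_congr rfl (fun k _ => by ring)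
        rw [hsum]
        simp only [ContinuousLinearMap.sub_apply, ContinuousLinearMap.smul_apply, smul_eq_mul]
        nlinarith [hz.1, hz.2, hi, hj]
      · simp only [Sum.elim_inr, if_neg hz]
        simp
  · rintro ⟨t, ht⟩
    -- use FM to recover the existential variable
    have hfm : ∃ s : ℝ, ∀ i, c i (Fin.last n) * s ≤ α i - ((∑ k : Fin n, c i k.castSucc * t k) + f i x) := by
      rw [fm_real]
      constructor
      · intro i hz
        have := ht (Sum.inl i)
        simp only [Sum.elim_inl, if_pos hz] at this
        linarith
      · intro i j hi hj
        have := ht (Sum.inr (i, j))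
        simp only [Sum.elim_inr, if_pos (And.intro hi hj)] at this
        have hsum : ∑ k : Fin n, (c i (Fin.last n) * c j k.castSucc - c j (Fin.last n) * c i k.castSucc) * t k
            = c i (Fin.last n) * (∑ k : Fin n, c j k.castSucc * t k)
              - c j (Fin.last n) * (∑ k : Fin n, c i k.castSucc * t k) := by
          rw [Finset.mul_sum, Finset.mul_sum, ← Finset.sum_sub_distrib]
          exact Finset.sum_congr rfl (fun k _ => by ring)
        rw [hsum] at this
        simp only [ContinuousLinearMap.sub_apply, ContinuousLinearMap.smul_apply,
          smul_eq_mul] at this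
        nlinarith
    obtain ⟨s, hs⟩ := hfm
    refine ⟨Fin.snoc t s, fun i => ?_⟩
    have := hs i
    rw [Fin.sum_univ_castSucc]
    simp only [Fin.snoc_castSucc, Fin.snoc_last]
    linarith

lemma polyE_isPCS : ∀ (n : ℕ) (S : Set X), PolyE n S → IsPCS S := by
  intro n
  induction n with
  | zero => exact fun S h => polyE_zero h
  | succ n ih => exact fun S h => ih S (polyE_succ h)

end PolyEAux

/-- The Minkowski sum of a polyhedral convex set and a generalized polyhedral
convex set is a polyhedral convex set. -/
theorem pcs_add_gpcs_isPCS {X : Type*} [AddCommGroup X] [Module ℝ X] [TopologicalSpace X]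
    [IsTopologicalAddGroup X] [ContinuousSMul ℝ X] [LocallyConvexSpace ℝ X] [T2Space X]
    (D₁ D₂ : Set X) (h₁ : IsPCS D₁) (h₂ : IsGPCS D₂) :
    IsPCS (D₁ + D₂) := by
  obtain ⟨p, f, α, hD₁⟩ := h₁
  obtain ⟨q, g, β, x₀, W, -, hD₂⟩ := h₂
  set Φg : X →ₗ[ℝ] (Fin q → ℝ) := LinearMap.pi (fun j => (g j : X →ₗ[ℝ] ℝ)) with hΦg
  set Φf : X →ₗ[ℝ] (Fin p → ℝ) := LinearMap.pi (fun i => (f i : X →ₗ[ℝ] ℝ)) with hΦf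
  set V : Submodule ℝ X := W ⊓ LinearMap.ker Φg with hV
  obtain ⟨nE, e, heW, hespan⟩ := exists_fin_span Φg W
  obtain ⟨nV, v, hvV, hvspan⟩ := exists_fin_span Φf V
  apply polyE_isPCS (nE + nV)
  refine ⟨Fin q ⊕ Fin p, inferInstance,
    Sum.elim (fun j => Fin.append (fun k => g j (e k)) (0 : Fin nV → ℝ))
      (fun i => Fin.append (fun k => -(f i (e k))) (fun m => -(f i (v m)))),
    Sum.elim (fun _ => 0) (fun i => f i),
    Sum.elim (fun j => β j - g j x₀) (fun i => α i + f i x₀), ?_⟩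
  ext x
  simp only [Set.mem_setOf_eq]
  rw [Set.mem_add]
  constructor
  · rintro ⟨d, hd, u, hu, rfl⟩
    rw [hD₁] at hd
    rw [hD₂] at hu
    obtain ⟨hu1, hu2⟩ := hu
    obtain ⟨w, hwW, hwu⟩ := hu1
    obtain ⟨t, ht⟩ := hespan w hwW
    set v' : X := w - ∑ k, t k • e k with hv'
    have hv'V : v' ∈ V := by
      refine Submodule.mem_inf.mpr ⟨Submodule.sub_mem _ hwW (Submodule.sum_mem _ fun k _ =>
        Submodule.smul_mem _ _ (heW k)), LinearMap.mem_ker.mpr ?_⟩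
      rw [map_sub, ht, map_sum]
      simp only [map_smul]
      exact sub_eq_zero_of_eq rfl
    obtain ⟨s, hs⟩ := hvspan v' hv'V
    have hgv' : ∀ j, g j v' = 0 := by
      intro j
      have h2 := LinearMap.mem_ker.mp (Submodule.mem_inf.mp hv'V).2
      have := congrFun h2 j
      simpa [hΦg] using this
    have hfv' : ∀ i, f i v' = ∑ m, s m * f i (v m) := by
      intro i
      have := congrFun hs i
      simpa [hΦf, Finset.sum_apply, smul_eq_mul] using this
    refine ⟨Fin.append t s, ?_⟩
    rintro (j | i)
    · simp only [Sum.elim_inl, Fin.sum_univ_add, Fin.append_left, Fin.append_right,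
        ContinuousLinearMap.zero_apply, Pi.zero_apply, zero_mul, Finset.sum_const_zero, add_zero]
      -- goal : ∑ k, g j (e k) * t k + 0 ≤ β j - g j x₀
      have hgu : g j (d + u) - g j d = g j x₀ + (∑ k, g j (e k) * t k) := by
        have hw2 : w = (∑ k, t k • e k) + v' := by rw [hv']; abel
        have : u = x₀ + w := by rw [← hwu]; rfl
        rw [this, hw2]
        simp only [map_add, map_sum, map_smul, smul_eq_mul, hgv' j]
        rw [Finset.sum_congr rfl (fun k _ => mul_comm (t k) (g j (e k)))]
        ring
      have := hu2 j
      have huu : g j u = g j x₀ + (∑ k, g j (e k) * t k) := by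
        have := hgu
        simp only [map_add] at this
        linarith
      linarith
    · simp only [Sum.elim_inr, Fin.sum_univ_add, Fin.append_left, Fin.append_right]
      have hfd : f i d = f i (d + u) - f i x₀ - (∑ k, f i (e k) * t k)
          - (∑ m, f i (v m) * s m) := by
        have hw2 : w = (∑ k, t k • e k) + v' := by rw [hv']; abel
        have hux : u = x₀ + w := by rw [← hwu]; rfl
        rw [map_add, hux, hw2]
        simp only [map_add, map_sum, map_smul, smul_eq_mul, hfv' i]
        rw [Finset.sum_congr rfl (fun k _ => mul_comm (t k) (f i (e k))),
          Finset.sum_congr rfl (fun m _ => mul_comm (s m) (f i (v m)))]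
        ring
      have hd' := hd i
      have e1 : ∑ k, -(f i (e k)) * t k = -(∑ k, f i (e k) * t k) := by
        rw [← Finset.sum_neg_distrib]
        exact Finset.sum_congr rfl fun k _ => by ring
      have e2 : ∑ m, -(f i (v m)) * s m = -(∑ m, f i (v m) * s m) := by
        rw [← Finset.sum_neg_distrib]
        exact Finset.sum_congr rfl fun m _ => by ring
      rw [e1, e2]
      linarith
  · rintro ⟨T, hT⟩
    set t : Fin nE → ℝ := fun k => T (Fin.castAdd nV k) with hts
    set s : Fin nV → ℝ := fun m => T (Fin.natAdd nE m) with hss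
    set v' : X := ∑ m, s m • v m with hv'
    have hv'V : v' ∈ V := Submodule.sum_mem _ fun m _ => Submodule.smul_mem _ _ (hvV m)
    set w : X := (∑ k, t k • e k) + v' with hw
    have hwW : w ∈ W := Submodule.add_mem _ (Submodule.sum_mem _ fun k _ =>
      Submodule.smul_mem _ _ (heW k)) (Submodule.mem_inf.mp hv'V).1
    have hgv' : ∀ j, g j v' = 0 := by
      intro j
      have h2 := LinearMap.mem_ker.mp (Submodule.mem_inf.mp hv'V).2
      have := congrFun h2 j
      simpa [hΦg] using this
    have hfv' : ∀ i, f i v' = ∑ m, s m * f i (v m) := by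
      intro i
      rw [hv', map_sum]
      simp [smul_eq_mul]
    refine ⟨x - (x₀ + w), ?_, x₀ + w, ?_, by abel⟩
    · rw [hD₁]
      intro i
      have hTi := hT (Sum.inr i)
      simp only [Sum.elim_inr, Fin.sum_univ_add, Fin.append_left, Fin.append_right] at hTi
      have hfw : f i w = (∑ k, t k • f i (e k)) + ∑ m, s m * f i (v m) := by
        rw [hw, map_add, map_sum]
        simp only [map_smul, hfv' i]
      simp only [smul_eq_mul] at hfw
      simp only [map_sub, map_add, hfw]
      have e1 : ∑ k, -(f i (e k)) * T (Fin.castAdd nV k) = -(∑ k, t k * f i (e k)) := by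
        rw [← Finset.sum_neg_distrib]
        exact Finset.sum_congr rfl fun k _ => by rw [hts]; ring
      have e2 : ∑ m, -(f i (v m)) * T (Fin.natAdd nE m) = -(∑ m, s m * f i (v m)) := by
        rw [← Finset.sum_neg_distrib]
        exact Finset.sum_congr rfl fun m _ => by rw [hss]; ring
      rw [e1, e2] at hTi
      linarith
    · rw [hD₂]
      refine ⟨⟨w, hwW, rfl⟩, ?_⟩
      intro j
      have hTj := hT (Sum.inl j)
      simp only [Sum.elim_inl, Fin.sum_univ_add, Fin.append_left, Fin.append_right,
        ContinuousLinearMap.zero_apply, Pi.zero_apply, zero_mul, Finset.sum_const_zero,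
        add_zero] at hTj
      have hgw : g j w = ∑ k, g j (e k) * T (Fin.castAdd nV k) := by
        rw [hw, map_add, map_sum, hgv' j]
        simp only [map_smul, smul_eq_mul, add_zero]
        exact Finset.sum_congr rfl fun k _ => by rw [hts]; ring
      simp only [map_add, hgw]
      linarith
end
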